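/- Diagonal PTDF entries (Corollary 1, part 2): If G is connected, then for each edge l = (i, j) ∈ E, the diagonal PTDF entry D_{ll} := B_l (A_{ii} + A_{jj} − A_{ij} − A_{ji}) satisfies D_{ll} = 1 − (Σ_{F ∈ T_{−l}} β(F)) / (Σ_{F ∈ T_E} β(F)), where T_{−l} is the set of spanning trees of G not containing l. Consequently, D_{ll} = 1 if l is a bridge of G, and 0 < D_{ll} < 1 otherwise. -/

import Mathlib

open Matrix Finset

variable {n m : ℕ}

/-- Nodes `a` and `b` are joined by some edge in the edge set `S`. -/
def edgeAdj (src tgt : Fin m → Fin (n + 1)) (S : Finset (Fin m)) (a b : Fin (n + 1)) : Prop :=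
  ∃ e ∈ S, (src e = a ∧ tgt e = b) ∨ (src e = b ∧ tgt e = a)

/-- The spanning subgraph with edge set `S` is connected. -/
def ConnectedOn (src tgt : Fin m → Fin (n + 1)) (S : Finset (Fin m)) : Prop :=
  ∀ a b : Fin (n + 1), Relation.ReflTransGen (edgeAdj src tgt S) a b

/-- `F` is the edge set of a spanning tree of the graph on `n + 1` nodes
(a connected spanning subgraph with exactly `n` edges). -/
def IsSpanningTree (src tgt : Fin m → Fin (n + 1)) (F : Finset (Fin m)) : Prop :=
  F.card = n ∧ ConnectedOn src tgt F

/-- Connectivity within the vertex set `V`, using only edges of `S` traversed inside `V`. -/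
def ConnWithin (src tgt : Fin m → Fin (n + 1)) (S : Finset (Fin m))
    (V : Finset (Fin (n + 1))) : Prop :=
  ∀ a ∈ V, ∀ b ∈ V,
    Relation.ReflTransGen (fun x y => x ∈ V ∧ y ∈ V ∧ edgeAdj src tgt S x y) a b

/-- `F` is a spanning forest of exactly two vertex-disjoint trees, one containing all
nodes in `N1` and the other containing all nodes in `N2`. -/
def IsSpanningForest2 (src tgt : Fin m → Fin (n + 1)) (F : Finset (Fin m))
    (N1 N2 : Finset (Fin (n + 1))) : Prop :=
  ∃ V1 V2 : Finset (Fin (n + 1)),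
    Disjoint V1 V2 ∧ V1 ∪ V2 = Finset.univ ∧ V1.Nonempty ∧ V2.Nonempty ∧
      N1 ⊆ V1 ∧ N2 ⊆ V2 ∧ F.card + 1 = n ∧
      (∀ e ∈ F, (src e ∈ V1 ∧ tgt e ∈ V1) ∨ (src e ∈ V2 ∧ tgt e ∈ V2)) ∧
      ConnWithin src tgt F V1 ∧ ConnWithin src tgt F V2

/-- The (signed) incidence matrix `C`. -/
def incMat (src tgt : Fin m → Fin (n + 1)) : Matrix (Fin (n + 1)) (Fin m) ℝ :=
  Matrix.of fun i e => if src e = i then 1 else if tgt e = i then -1 else 0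

/-- The weighted Laplacian `L = C ⬝ diag B ⬝ Cᵀ`. -/
noncomputable def lap (src tgt : Fin m → Fin (n + 1)) (B : Fin m → ℝ) :
    Matrix (Fin (n + 1)) (Fin (n + 1)) ℝ :=
  incMat src tgt * Matrix.diagonal B * (incMat src tgt)ᵀ

/-- The reduced Laplacian: delete the row and column of the reference node `Fin.last n`. -/
noncomputable def rlap (src tgt : Fin m → Fin (n + 1)) (B : Fin m → ℝ) :
    Matrix (Fin n) (Fin n) ℝ :=
  (lap src tgt B).submatrix Fin.castSucc Fin.castSucc

/-- The inverse of the reduced Laplacian, padded with a zero row and column at the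
reference node. -/
noncomputable def Amat (src tgt : Fin m → Fin (n + 1)) (B : Fin m → ℝ) :
    Matrix (Fin (n + 1)) (Fin (n + 1)) ℝ :=
  Matrix.of fun i j =>
    if hi : i = Fin.last n then 0
    else if hj : j = Fin.last n then 0
    else (rlap src tgt B)⁻¹ (i.castPred hi) (j.castPred hj)

open Classical in
/-- `Σ_{F ∈ T_E} β(F)`: total weight of all spanning trees. -/
noncomputable def treeSum (src tgt : Fin m → Fin (n + 1)) (B : Fin m → ℝ) : ℝ :=
  ∑ F ∈ Finset.univ.filter (fun F => IsSpanningTree src tgt F), ∏ e ∈ F, B e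

open Classical in
/-- `Σ_{F ∈ T_{−l}} β(F)`: total weight of all spanning trees avoiding the edge `l`. -/
noncomputable def treeSumAvoiding (src tgt : Fin m → Fin (n + 1)) (B : Fin m → ℝ)
    (l : Fin m) : ℝ :=
  ∑ F ∈ Finset.univ.filter (fun F => IsSpanningTree src tgt F ∧ l ∉ F), ∏ e ∈ F, B e

open Classical in
/-- `Σ_{F ∈ T(N1, N2)} β(F)`: total weight of two-tree spanning forests separating
`N1` from `N2`. -/
noncomputable def forestSum (src tgt : Fin m → Fin (n + 1)) (B : Fin m → ℝ)
    (N1 N2 : Finset (Fin (n + 1))) : ℝ :=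
  ∑ F ∈ Finset.univ.filter (fun F => IsSpanningForest2 src tgt F N1 N2), ∏ e ∈ F, B e

/-- The power transfer distribution factor `D_{l, î ĵ}`. -/
noncomputable def ptdf (src tgt : Fin m → Fin (n + 1)) (B : Fin m → ℝ) (l : Fin m)
    (ihat jhat : Fin (n + 1)) : ℝ :=
  B l * (Amat src tgt B (src l) ihat + Amat src tgt B (tgt l) jhat
    - Amat src tgt B (src l) jhat - Amat src tgt B (tgt l) ihat)

/-- An edge is a bridge if its removal disconnects the graph. -/
def IsBridge (src tgt : Fin m → Fin (n + 1)) (l : Fin m) : Prop :=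
  ¬ ConnectedOn src tgt (Finset.univ.erase l)

/-- There is a simple cycle (distinct edges, distinct vertices) containing both edges
`l` and `lhat`. -/
def ExistsSimpleCycleThrough (src tgt : Fin m → Fin (n + 1)) (l lhat : Fin m) : Prop :=
  ∃ (k : ℕ) (es : Fin (k + 2) → Fin m) (vs : Fin (k + 2) → Fin (n + 1)),
    Function.Injective es ∧ Function.Injective vs ∧
      (∀ t, (src (es t) = vs t ∧ tgt (es t) = vs (t + 1)) ∨
        (src (es t) = vs (t + 1) ∧ tgt (es t) = vs t)) ∧
      (∃ t, es t = l) ∧ (∃ t, es t = lhat)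

/-- The incidence submatrix `C_{−F}` on the surviving edges. -/
def Cminus (src tgt : Fin m → Fin (n + 1)) (F : Finset (Fin m)) :
    Matrix (Fin (n + 1)) {e : Fin m // e ∉ F} ℝ :=
  (incMat src tgt).submatrix id (fun e => e.val)

/-- The incidence submatrix `C_F` on the removed edges. -/
def Cof (src tgt : Fin m → Fin (n + 1)) (F : Finset (Fin m)) :
    Matrix (Fin (n + 1)) {e : Fin m // e ∈ F} ℝ :=
  (incMat src tgt).submatrix id (fun e => e.val)

/-- The diagonal susceptance submatrix `B_{−F}` on the surviving edges. -/
noncomputable def Bminus (B : Fin m → ℝ) (F : Finset (Fin m)) :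
    Matrix {e : Fin m // e ∉ F} {e : Fin m // e ∉ F} ℝ :=
  Matrix.diagonal fun e => B e.val

/-- The diagonal susceptance submatrix `B_F` on the removed edges. -/
noncomputable def Bof (B : Fin m → ℝ) (F : Finset (Fin m)) :
    Matrix {e : Fin m // e ∈ F} {e : Fin m // e ∈ F} ℝ :=
  Matrix.diagonal fun e => B e.val

/-- The post-contingency Laplacian `L_{−F} = C_{−F} ⬝ B_{−F} ⬝ C_{−F}ᵀ`. -/
noncomputable def lapMinus (src tgt : Fin m → Fin (n + 1)) (B : Fin m → ℝ)
    (F : Finset (Fin m)) : Matrix (Fin (n + 1)) (Fin (n + 1)) ℝ :=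
  Cminus src tgt F * Bminus B F * (Cminus src tgt F)ᵀ

/-- The padded inverse `A_{−F}` of the post-contingency reduced Laplacian. -/
noncomputable def AmatMinus (src tgt : Fin m → Fin (n + 1)) (B : Fin m → ℝ)
    (F : Finset (Fin m)) : Matrix (Fin (n + 1)) (Fin (n + 1)) ℝ :=
  Matrix.of fun i j =>
    if hi : i = Fin.last n then 0
    else if hj : j = Fin.last n then 0
    else ((lapMinus src tgt B F).submatrix Fin.castSucc Fin.castSucc)⁻¹
      (i.castPred hi) (j.castPred hj)

/-- The pre-contingency branch flow vector `f = diag(B) ⬝ Cᵀ ⬝ A ⬝ p`. -/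
noncomputable def flowPre (src tgt : Fin m → Fin (n + 1)) (B : Fin m → ℝ)
    (p : Fin (n + 1) → ℝ) : Fin m → ℝ :=
  (Matrix.diagonal B * (incMat src tgt)ᵀ * Amat src tgt B) *ᵥ p

/-- The post-contingency branch flow vector `f̃_{−F} = B_{−F} ⬝ C_{−F}ᵀ ⬝ A_{−F} ⬝ p`
on the surviving edges. -/
noncomputable def flowPost (src tgt : Fin m → Fin (n + 1)) (B : Fin m → ℝ)
    (F : Finset (Fin m)) (p : Fin (n + 1) → ℝ) : {e : Fin m // e ∉ F} → ℝ :=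
  (Bminus B F * (Cminus src tgt F)ᵀ * AmatMinus src tgt B F) *ᵥ p

/-- The generalized line outage distribution factor matrix
`K^F = B_{−F} ⬝ C_{−F}ᵀ ⬝ A_{−F} ⬝ C_F`. -/
noncomputable def glodf (src tgt : Fin m → Fin (n + 1)) (B : Fin m → ℝ)
    (F : Finset (Fin m)) : Matrix {e : Fin m // e ∉ F} {e : Fin m // e ∈ F} ℝ :=
  Bminus B F * (Cminus src tgt F)ᵀ * AmatMinus src tgt B F * Cof src tgt F

/-- The PTDF submatrix `D_{FF} = B_F ⬝ C_Fᵀ ⬝ A ⬝ C_F`. -/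
noncomputable def Dff (src tgt : Fin m → Fin (n + 1)) (B : Fin m → ℝ)
    (F : Finset (Fin m)) : Matrix {e : Fin m // e ∈ F} {e : Fin m // e ∈ F} ℝ :=
  Bof B F * (Cof src tgt F)ᵀ * Amat src tgt B * Cof src tgt F

/-- The PTDF submatrix `D_{−FF} = B_{−F} ⬝ C_{−F}ᵀ ⬝ A ⬝ C_F`. -/
noncomputable def DmFF (src tgt : Fin m → Fin (n + 1)) (B : Fin m → ℝ)
    (F : Finset (Fin m)) : Matrix {e : Fin m // e ∉ F} {e : Fin m // e ∈ F} ℝ :=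
  Bminus B F * (Cminus src tgt F)ᵀ * Amat src tgt B * Cof src tgt F

namespace PTDFAux



variable {R : Type*} [CommRing R] {ι : Type*} [Fintype ι] [DecidableEq ι] {k : ℕ}

theorem det_mul_aux' {M : Matrix (Fin k) ι R} {N : Matrix ι (Fin k) R} {p : Fin k → ι}
    (H : ¬Function.Injective p) :
    (∑ σ : Equiv.Perm (Fin k),
      ((Equiv.Perm.sign σ : ℤ) : R) * ∏ x, M (σ x) (p x) * N (p x) x) = 0 := by
  obtain ⟨i, j, hpij, hij⟩ : ∃ i j, p i = p j ∧ i ≠ j := by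
    rw [Function.Injective] at H
    push_neg at H
    obtain ⟨i, j, h1, h2⟩ := H
    exact ⟨i, j, h1, h2⟩
  exact
    Finset.sum_involution (fun σ _ => σ * Equiv.swap i j)
      (fun σ _ => by
        have : (∏ x, M (σ x) (p x)) = ∏ x, M ((σ * Equiv.swap i j) x) (p x) :=
          Fintype.prod_equiv (Equiv.swap i j) _ _ (by simp [Equiv.apply_swap_eq_self hpij])
        simp [this, Equiv.Perm.sign_swap hij, -Equiv.Perm.sign_swap', Finset.prod_mul_distrib])
      (fun σ _ _ => (not_congr Equiv.mul_swap_eq_iff).mpr hij) (fun _ _ => Finset.mem_univ _)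
      fun σ _ => Equiv.mul_swap_involutive i j σ

theorem sum_perm_eq_det_mul (P Q : Matrix (Fin k) (Fin k) R) :
    ∑ τ : Equiv.Perm (Fin k), ∑ σ : Equiv.Perm (Fin k),
      ((Equiv.Perm.sign σ : ℤ) : R) * ∏ i, P (σ i) (τ i) * Q (τ i) i = P.det * Q.det := by
  have h1 : P.det * Q.det = (P * Q).det := (Matrix.det_mul P Q).symm
  rw [h1]
  symm
  calc
    (P * Q).det = ∑ p : Fin k → Fin k, ∑ σ : Equiv.Perm (Fin k),
        ((Equiv.Perm.sign σ : ℤ) : R) * ∏ i, P (σ i) (p i) * Q (p i) i := by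
      simp only [Matrix.det_apply', Matrix.mul_apply, Finset.prod_univ_sum, Finset.mul_sum,
        Fintype.piFinset_univ]
      rw [Finset.sum_comm]
    _ = ∑ p : Fin k → Fin k with Function.Bijective p, ∑ σ : Equiv.Perm (Fin k),
        ((Equiv.Perm.sign σ : ℤ) : R) * ∏ i, P (σ i) (p i) * Q (p i) i := by
      refine (Finset.sum_subset (Finset.filter_subset _ _) fun f _ hbij ↦
        Matrix.det_mul_aux ?_).symm
      simpa only [true_and, Finset.mem_filter, Finset.mem_univ] using hbij
    _ = ∑ τ : Equiv.Perm (Fin k), ∑ σ : Equiv.Perm (Fin k),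
        ((Equiv.Perm.sign σ : ℤ) : R) * ∏ i, P (σ i) (τ i) * Q (τ i) i :=
      Finset.sum_bij (fun p h ↦ Equiv.ofBijective p (Finset.mem_filter.1 h).2)
        (fun _ _ ↦ Finset.mem_univ _)
        (fun _ _ _ _ h ↦ by injection h)
        (fun b _ ↦ ⟨b, Finset.mem_filter.2 ⟨Finset.mem_univ _, b.bijective⟩,
          Equiv.coe_fn_injective rfl⟩) fun _ _ ↦ rfl

theorem cauchy_binet [LinearOrder ι] (M : Matrix (Fin k) ι R) (N : Matrix ι (Fin k) R) :
    (M * N).det = ∑ F : Finset ι, (if h : F.card = k then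
      (M.submatrix id (F.orderEmbOfFin h)).det * (N.submatrix (F.orderEmbOfFin h) id).det
      else 0) := by
  have step1 : (M * N).det = ∑ p : Fin k → ι, ∑ σ : Equiv.Perm (Fin k),
      ((Equiv.Perm.sign σ : ℤ) : R) * ∏ i, M (σ i) (p i) * N (p i) i := by
    simp only [Matrix.det_apply', Matrix.mul_apply, Finset.prod_univ_sum, Finset.mul_sum,
      Fintype.piFinset_univ]
    rw [Finset.sum_comm]
  have step2 : (M * N).det = ∑ p : Fin k → ι with Function.Injective p,
      ∑ σ : Equiv.Perm (Fin k),
      ((Equiv.Perm.sign σ : ℤ) : R) * ∏ i, M (σ i) (p i) * N (p i) i := by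
    rw [step1]
    refine (Finset.sum_subset (Finset.filter_subset _ _) fun f _ hinj ↦ det_mul_aux' ?_).symm
    simpa only [true_and, Finset.mem_filter, Finset.mem_univ] using hinj
  rw [step2, ← Finset.sum_fiberwise (Finset.univ.filter (fun p : Fin k → ι =>
    Function.Injective p)) (fun p => Finset.image p Finset.univ)]
  refine Finset.sum_congr rfl fun F _ => ?_
  by_cases hF : F.card = k
  · rw [dif_pos hF, ← sum_perm_eq_det_mul]
    refine (Finset.sum_bij (fun (τ : Equiv.Perm (Fin k)) _ => F.orderEmbOfFin hF ∘ τ)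
      ?_ ?_ ?_ ?_).symm
    · intro τ _
      simp only [Finset.mem_filter, Finset.mem_univ, true_and]
      constructor
      · exact (F.orderEmbOfFin hF).injective.comp τ.injective
      · ext x
        simp only [Finset.mem_image, Finset.mem_univ, true_and, Function.comp_apply]
        constructor
        · rintro ⟨i, rfl⟩; exact F.orderEmbOfFin_mem hF (τ i)
        · intro hx
          have : x ∈ Set.range (F.orderEmbOfFin hF) := by
            rw [Finset.range_orderEmbOfFin]; exact hx
          obtain ⟨i, rfl⟩ := this
          exact ⟨τ.symm i, by simp⟩
    · intro τ1 _ τ2 _ h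
      exact Equiv.ext fun i => (F.orderEmbOfFin hF).injective (congrFun h i)
    · intro p hp
      simp only [Finset.mem_filter, Finset.mem_univ, true_and] at hp
      obtain ⟨hinj, himg⟩ := hp
      have hmem : ∀ i, p i ∈ F := fun i => himg ▸ Finset.mem_image_of_mem p (Finset.mem_univ i)
      have hbij : Function.Bijective (fun i => (⟨p i, hmem i⟩ : {x // x ∈ F})) := by
        rw [Fintype.bijective_iff_injective_and_card]
        constructor
        · intro a b hab
          exact hinj (congrArg Subtype.val hab)
        · simp [Fintype.card_coe, hF]
      refine ⟨(Equiv.ofBijective _ hbij).trans (F.orderIsoOfFin hF).toEquiv.symm,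
        Finset.mem_univ _, ?_⟩
      ext i
      simp only [Function.comp_apply, Equiv.trans_apply]
      rw [← Finset.coe_orderIsoOfFin_apply]
      simp
    · intro τ _
      rfl
  · rw [dif_neg hF]
    rw [Finset.filter_filter]
    convert Finset.sum_empty
    rw [Finset.filter_eq_empty_iff]
    intro p _
    rintro ⟨hinj, rfl⟩
    exact hF (by rw [Finset.card_image_of_injective _ hinj, Finset.card_univ, Fintype.card_fin])




/-- incidence value of edge `e` at vertex `v`. -/
def incVal {V E : Type*} [DecidableEq V] (src tgt : E → V) (e : E) (v : V) : ℝ :=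
  if src e = v then 1 else if tgt e = v then -1 else 0

/-- adjacency via some edge -/
def adjOf {V E : Type*} (src tgt : E → V) (x y : V) : Prop :=
  ∃ e : E, (src e = x ∧ tgt e = y) ∨ (src e = y ∧ tgt e = x)

lemma sq_sign {σ : Equiv.Perm (Fin 1)} : True := trivial

lemma det_sq_submatrix {α β γ : Type*} [Fintype α] [DecidableEq α] [Fintype β] [DecidableEq β]
    [Fintype γ] [DecidableEq γ]
    (A : Matrix α β ℝ) (e₁ e₁' : γ ≃ α) (e₂ e₂' : γ ≃ β) :
    ((A.submatrix e₁ e₂).det) ^ 2 = ((A.submatrix e₁' e₂').det) ^ 2 := by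
  have h : A.submatrix e₁ e₂
      = ((A.submatrix e₁' e₂').submatrix (e₁.trans e₁'.symm) id).submatrix id
        (e₂.trans e₂'.symm) := by
    ext i j; simp
  rw [h, Matrix.det_permute' (e₂.trans e₂'.symm), Matrix.det_permute (e₁.trans e₁'.symm)]
  rcases Int.units_eq_one_or (Equiv.Perm.sign (e₂.trans e₂'.symm)) with h2 | h2 <;>
    rcases Int.units_eq_one_or (Equiv.Perm.sign (e₁.trans e₁'.symm)) with h1 | h1 <;>
    simp [h1, h2] <;> ring

lemma card_ne {V : Type*} [Fintype V] [DecidableEq V] (v : V) :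
    Fintype.card {u : V // u ≠ v} = Fintype.card V - 1 := by
  have h2 := Fintype.card_subtype_compl (fun u : V => u = v)
  rw [Fintype.card_subtype_eq] at h2
  rw [← h2]

theorem treeDetAux (k : ℕ) :
    ∀ (V E : Type) [Fintype V] [DecidableEq V] [Fintype E] [DecidableEq E],
    ∀ (src tgt : E → V), (∀ e, src e ≠ tgt e) →
      (∀ a b : V, Relation.ReflTransGen (adjOf src tgt) a b) →
      ∀ (r : V) (eR : {v : V // v ≠ r} ≃ Fin k) (eE : E ≃ Fin k),
      (Matrix.det (Matrix.of fun i j : Fin k =>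
        incVal src tgt (eE.symm j) (eR.symm i).val)) ^ 2 = 1 := by
  induction k with
  | zero =>
    intro V E _ _ _ _ src tgt hs hc r eR eE
    simp [Matrix.det_fin_zero]
  | succ k ih =>
    intro V E _ _ _ _ src tgt hs hc r eR eE
    classical
    -- cardinalities
    have hcardR : Fintype.card {v : V // v ≠ r} = k + 1 := by
      rw [Fintype.card_congr eR, Fintype.card_fin]
    have hcardE : Fintype.card E = k + 1 := by
      rw [Fintype.card_congr eE, Fintype.card_fin]
    have hcardV : Fintype.card V = k + 2 := by
      have h1 := Fintype.card_subtype_compl (fun v : V => v = r)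
      have h1' : Fintype.card {v : V // v ≠ r} = Fintype.card V - 1 := by
        simpa [Fintype.card_subtype_eq] using h1
      have h3 : 1 ≤ Fintype.card V := Fintype.card_pos_iff.mpr ⟨r⟩
      omega
    -- degrees
    set deg : V → ℕ := fun u => (Finset.univ.filter fun e => src e = u ∨ tgt e = u).card with hdeg
    have hdegsum : ∑ u : V, deg u = 2 * (k + 1) := by
      have hsplit : ∀ u : V, deg u = (Finset.univ.filter fun e => src e = u).card
          + (Finset.univ.filter fun e => tgt e = u).card := by
        intro u
        rw [hdeg]
        simp only
        rw [Finset.filter_or, Finset.card_union_of_disjoint]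
        rw [Finset.disjoint_filter]
        intro e _ h1 h2
        exact hs e (h1.trans h2.symm)
      have h1 : (Finset.univ : Finset E).card = ∑ u : V,
          (Finset.univ.filter fun e => src e = u).card :=
        Finset.card_eq_sum_card_fiberwise (fun e _ => Finset.mem_univ (src e))
      have h2 : (Finset.univ : Finset E).card = ∑ u : V,
          (Finset.univ.filter fun e => tgt e = u).card :=
        Finset.card_eq_sum_card_fiberwise (fun e _ => Finset.mem_univ (tgt e))
      have h3 : (Finset.univ : Finset E).card = k + 1 := by
        rw [Finset.card_univ, hcardE]
      simp only [hsplit, Finset.sum_add_distrib, ← h1, ← h2, h3]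
      ring
    have hdegpos : ∀ u : V, 1 ≤ deg u := by
      intro u
      have : 1 < Fintype.card V := by omega
      obtain ⟨u', hu'⟩ := Fintype.exists_ne_of_one_lt_card this u
      rcases (hc u u').cases_head with h | ⟨c, hadj, _⟩
      · exact absurd h.symm hu'
      · obtain ⟨e, he⟩ := hadj
        have : e ∈ Finset.univ.filter fun e => src e = u ∨ tgt e = u := by
          simp only [Finset.mem_filter, Finset.mem_univ, true_and]
          rcases he with ⟨h1, _⟩ | ⟨_, h2⟩
          · exact Or.inl h1
          · exact Or.inr h2
        exact Finset.card_pos.mpr ⟨e, this⟩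
    -- a leaf different from the root
    obtain ⟨v, hvr, hdegv⟩ : ∃ v : V, v ≠ r ∧ deg v = 1 := by
      by_contra hcon
      push_neg at hcon
      have h2le : ∀ u ∈ Finset.univ.erase r, 2 ≤ deg u := by
        intro u hu
        have hur : u ≠ r := (Finset.mem_erase.mp hu).1
        have := hcon u hur
        have := hdegpos u
        omega
      have hsum : deg r + ∑ u ∈ Finset.univ.erase r, deg u = ∑ u : V, deg u :=
        Finset.add_sum_erase _ _ (Finset.mem_univ r)
      have hcard : (Finset.univ.erase r).card = k + 1 := by
        rw [Finset.card_erase_of_mem (Finset.mem_univ r), Finset.card_univ, hcardV]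
        omega
      have hcard' : True := trivial
      have hge : (Finset.univ.erase r).card * 2 ≤ ∑ u ∈ Finset.univ.erase r, deg u := by
        calc (Finset.univ.erase r).card * 2 = ∑ _u ∈ Finset.univ.erase r, 2 := by
              rw [Finset.sum_const, smul_eq_mul]
          _ ≤ ∑ u ∈ Finset.univ.erase r, deg u := Finset.sum_le_sum h2le
      have := hdegpos r
      omega
    -- the unique edge at the leaf
    obtain ⟨e0, he0⟩ : ∃ e0, Finset.univ.filter (fun e => src e = v ∨ tgt e = v) = {e0} :=
      Finset.card_eq_one.mp hdegv
    have hinc : ∀ e, (src e = v ∨ tgt e = v) ↔ e = e0 := by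
      intro e
      constructor
      · intro h
        have hm : e ∈ Finset.univ.filter (fun e => src e = v ∨ tgt e = v) :=
          Finset.mem_filter.mpr ⟨Finset.mem_univ e, h⟩
        rw [he0] at hm
        exact Finset.mem_singleton.mp hm
      · intro he
        have hm : e0 ∈ ({e0} : Finset E) := Finset.mem_singleton_self e0
        rw [← he0] at hm
        rw [he]
        exact (Finset.mem_filter.mp hm).2
    have he0v : src e0 = v ∨ tgt e0 = v := (hinc e0).mpr rfl
    -- the other endpoint
    set w : V := if src e0 = v then tgt e0 else src e0 with hwdef
    have hwv : w ≠ v := by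
      rw [hwdef]
      split
      · rename_i h; intro h2; exact hs e0 (h.trans h2.symm)
      · rename_i h; exact h
    have hsnv : ∀ e : E, e ≠ e0 → src e ≠ v := fun e he h => he ((hinc e).mp (Or.inl h))
    have htnv : ∀ e : E, e ≠ e0 → tgt e ≠ v := fun e he h => he ((hinc e).mp (Or.inr h))
    -- the smaller graph
    let V' := {u : V // u ≠ v}
    let E' := {e : E // e ≠ e0}
    let src' : E' → V' := fun e => ⟨src e.1, hsnv e.1 e.2⟩
    let tgt' : E' → V' := fun e => ⟨tgt e.1, htnv e.1 e.2⟩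
    have hs' : ∀ e : E', src' e ≠ tgt' e := fun e h => hs e.1 (congrArg Subtype.val h)
    -- projection onto the smaller graph
    let π : V → V' := fun x => if h : x = v then ⟨w, hwv⟩ else ⟨x, h⟩
    have hπ_ne : ∀ (x : V) (h : x ≠ v), π x = ⟨x, h⟩ := fun x h => dif_neg h
    have hπv : π v = ⟨w, hwv⟩ := dif_pos rfl
    have hπe0 : π (src e0) = π (tgt e0) := by
      rcases he0v with h | h
      · have h2 : tgt e0 ≠ v := fun h2 => hs e0 (h.trans h2.symm)
        have hwe : w = tgt e0 := by rw [hwdef, if_pos h]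
        rw [hπ_ne (tgt e0) h2, h, hπv]
        exact Subtype.ext hwe
      · have hsv : src e0 ≠ v := fun h2 => hs e0 (h2.trans h.symm)
        have hwe : w = src e0 := by rw [hwdef, if_neg hsv]
        rw [hπ_ne (src e0) hsv, h, hπv]
        exact Subtype.ext hwe.symm
    have hkey : ∀ x y : V, adjOf src tgt x y →
        Relation.ReflTransGen (adjOf src' tgt') (π x) (π y) := by
      rintro x y ⟨e, he⟩
      by_cases heq : e = e0
      · subst heq
        rcases he with ⟨h1, h2⟩ | ⟨h1, h2⟩
        · rw [← h1, ← h2, hπe0]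
        · rw [← h1, ← h2, ← hπe0]
      · have h1 : src e ≠ v := hsnv e heq
        have h2 : tgt e ≠ v := htnv e heq
        refine Relation.ReflTransGen.single ⟨⟨e, heq⟩, ?_⟩
        rcases he with ⟨ha, hb⟩ | ⟨ha, hb⟩
        · subst ha; subst hb
          rw [hπ_ne (src e) h1, hπ_ne (tgt e) h2]
          exact Or.inl ⟨rfl, rfl⟩
        · subst ha; subst hb
          rw [hπ_ne (src e) h1, hπ_ne (tgt e) h2]
          exact Or.inr ⟨rfl, rfl⟩
    have hlift : ∀ x y : V, Relation.ReflTransGen (adjOf src tgt) x y →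
        Relation.ReflTransGen (adjOf src' tgt') (π x) (π y) := by
      intro x y h
      induction h with
      | refl => exact Relation.ReflTransGen.refl
      | tail _ h2 ih2 => exact ih2.trans (hkey _ _ h2)
    have hc' : ∀ a b : V', Relation.ReflTransGen (adjOf src' tgt') a b := by
      intro a b
      have h := hlift a.1 b.1 (hc a.1 b.1)
      rw [hπ_ne a.1 a.2, hπ_ne b.1 b.2] at h
      exact h
    let r' : V' := ⟨r, fun h => hvr h.symm⟩
    -- cardinalities of the smaller graph
    have hcardV' : Fintype.card V' = k + 1 := by
      have h1' : Fintype.card V' = Fintype.card V - 1 := card_ne v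
      omega
    have hcardE' : Fintype.card E' = k := by
      have h1' : Fintype.card E' = Fintype.card E - 1 := card_ne e0
      omega
    have hcardR' : Fintype.card {x : V' // x ≠ r'} = k := by
      have h1' : Fintype.card {x : V' // x ≠ r'} = Fintype.card V' - 1 := card_ne r'
      omega
    -- adapted equivalences on the big graph
    let vR : {u : V // u ≠ r} := ⟨v, hvr⟩
    let fR : {u : V // u ≠ r} ≃ Fin (k + 1) := eR.trans (Equiv.swap (eR vR) (Fin.last k))
    have hfRv : fR vR = Fin.last k := by
      simp [fR, Equiv.swap_apply_left]
    let fE : E ≃ Fin (k + 1) := eE.trans (Equiv.swap (eE e0) (Fin.last k))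
    have hfEe0 : fE e0 = Fin.last k := by
      simp [fE, Equiv.swap_apply_left]
    -- the reindexed incidence matrix
    let base : Matrix {u : V // u ≠ r} E ℝ := Matrix.of fun u e => incVal src tgt e u.val
    let A : Matrix (Fin (k + 1)) (Fin (k + 1)) ℝ :=
      Matrix.of fun i j => incVal src tgt (fE.symm j) (fR.symm i).val
    have htrans : ((Matrix.of fun i j : Fin (k + 1) =>
        incVal src tgt (eE.symm j) (eR.symm i).val).det) ^ 2 = (A.det) ^ 2 := by
      have h1 : (Matrix.of fun i j : Fin (k + 1) =>
          incVal src tgt (eE.symm j) (eR.symm i).val) = base.submatrix eR.symm eE.symm := rfl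
      have h2 : A = base.submatrix fR.symm fE.symm := rfl
      rw [h1, h2]
      exact det_sq_submatrix base eR.symm fR.symm eE.symm fE.symm
    have hfRlast : (fR.symm (Fin.last k)).val = v := by
      rw [← hfRv, Equiv.symm_apply_apply]
    have hfElast : fE.symm (Fin.last k) = e0 := by
      rw [← hfEe0, Equiv.symm_apply_apply]
    have hApart : ∀ j : Fin (k + 1), j ≠ Fin.last k → A (Fin.last k) j = 0 := by
      intro j hj
      have h1 : fE.symm j ≠ e0 := by
        intro h
        apply hj
        rw [← hfEe0, ← h, Equiv.apply_symm_apply]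
      show incVal src tgt (fE.symm j) (fR.symm (Fin.last k)).val = 0
      rw [hfRlast, incVal, if_neg (hsnv _ h1), if_neg (htnv _ h1)]
    have hcorner : (A (Fin.last k) (Fin.last k)) ^ 2 = 1 := by
      show (incVal src tgt (fE.symm (Fin.last k)) (fR.symm (Fin.last k)).val) ^ 2 = 1
      rw [hfRlast, hfElast, incVal]
      by_cases hsv : src e0 = v
      · rw [if_pos hsv]; norm_num
      · rcases he0v with h | h
        · exact absurd h hsv
        · rw [if_neg hsv, if_pos h]; norm_num
    have hexp : A.det = A (Fin.last k) (Fin.last k)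
        * (A.submatrix Fin.castSucc Fin.castSucc).det := by
      rw [Matrix.det_succ_row A (Fin.last k)]
      rw [Finset.sum_eq_single (Fin.last k)]
      · rw [Fin.succAbove_last]
        have hpow : (-1 : ℝ) ^ ((Fin.last k : ℕ) + (Fin.last k : ℕ)) = 1 := by
          rw [Fin.val_last]
          exact Even.neg_one_pow ⟨k, by ring⟩
        rw [hpow, one_mul]
      · intro j _ hj
        rw [hApart j hj, mul_zero, zero_mul]
      · intro h
        exact absurd (Finset.mem_univ _) h
    -- the equivalences for the smaller graph
    have hgE0 : ∀ e : E', fE e.1 ≠ Fin.last k :=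
      fun e h => e.2 (fE.injective (h.trans hfEe0.symm))
    let gE : E' → Fin k := fun e => (fE e.1).castPred (hgE0 e)
    have hgEinj : Function.Injective gE := by
      intro a b h
      apply Subtype.ext
      apply fE.injective
      have h2 := congrArg Fin.castSucc h
      rwa [Fin.castSucc_castPred, Fin.castSucc_castPred] at h2
    have hgEbij : Function.Bijective gE :=
      (Fintype.bijective_iff_injective_and_card gE).mpr
        ⟨hgEinj, by rw [hcardE', Fintype.card_fin]⟩
    let eE' : E' ≃ Fin k := Equiv.ofBijective gE hgEbij
    have hne_r : ∀ u : {x : V' // x ≠ r'}, u.1.1 ≠ r := fun u h => u.2 (Subtype.ext h)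
    have hgR0 : ∀ u : {x : V' // x ≠ r'}, fR ⟨u.1.1, hne_r u⟩ ≠ Fin.last k := by
      intro u h
      have h2 := fR.injective (h.trans hfRv.symm)
      exact u.1.2 (congrArg Subtype.val h2)
    let gR : {x : V' // x ≠ r'} → Fin k := fun u => (fR ⟨u.1.1, hne_r u⟩).castPred (hgR0 u)
    have hgRinj : Function.Injective gR := by
      intro a b h
      have h2 := congrArg Fin.castSucc h
      rw [Fin.castSucc_castPred, Fin.castSucc_castPred] at h2
      have h3 := fR.injective h2
      have h4 : a.1.1 = b.1.1 := Subtype.mk_eq_mk.mp h3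
      exact Subtype.ext (Subtype.ext h4)
    have hgRbij : Function.Bijective gR :=
      (Fintype.bijective_iff_injective_and_card gR).mpr
        ⟨hgRinj, by rw [hcardR', Fintype.card_fin]⟩
    let eR' : {x : V' // x ≠ r'} ≃ Fin k := Equiv.ofBijective gR hgRbij
    -- the minor is the incidence matrix of the smaller graph
    have hminor : A.submatrix Fin.castSucc Fin.castSucc
        = Matrix.of fun i j : Fin k => incVal src' tgt' (eE'.symm j) (eR'.symm i).val := by
      ext i j
      have hje : fE.symm (Fin.castSucc j) = (eE'.symm j).1 := by
        rw [Equiv.symm_apply_eq]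
        have h2 : gE (eE'.symm j) = j := eE'.apply_symm_apply j
        have h3 := congrArg Fin.castSucc h2
        rw [Fin.castSucc_castPred] at h3
        exact h3.symm
      have hiv : fR.symm (Fin.castSucc i) = ⟨(eR'.symm i).1.1, hne_r (eR'.symm i)⟩ := by
        rw [Equiv.symm_apply_eq]
        have h2 : gR (eR'.symm i) = i := eR'.apply_symm_apply i
        have h3 := congrArg Fin.castSucc h2
        rw [Fin.castSucc_castPred] at h3
        exact h3.symm
      show incVal src tgt (fE.symm (Fin.castSucc j)) (fR.symm (Fin.castSucc i)).val
        = incVal src' tgt' (eE'.symm j) (eR'.symm i).val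
      rw [hje, hiv]
      show incVal src tgt (eE'.symm j).1 (eR'.symm i).1.1
        = incVal src' tgt' (eE'.symm j) (eR'.symm i).1
      show (if src (eE'.symm j).1 = (eR'.symm i).1.1 then (1:ℝ)
          else if tgt (eE'.symm j).1 = (eR'.symm i).1.1 then -1 else 0)
        = if (⟨src (eE'.symm j).1, hsnv _ (eE'.symm j).2⟩ : V') = (eR'.symm i).1 then (1:ℝ)
          else if (⟨tgt (eE'.symm j).1, htnv _ (eE'.symm j).2⟩ : V') = (eR'.symm i).1 then -1
          else 0
      by_cases h1 : src (eE'.symm j).1 = (eR'.symm i).1.1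
      · rw [if_pos h1, if_pos (Subtype.ext h1)]
      · rw [if_neg h1, if_neg (fun hh => h1 (congrArg Subtype.val hh))]
        by_cases h2 : tgt (eE'.symm j).1 = (eR'.symm i).1.1
        · rw [if_pos h2, if_pos (Subtype.ext h2)]
        · rw [if_neg h2, if_neg (fun hh => h2 (congrArg Subtype.val hh))]
    have hih := ih V' E' src' tgt' hs' hc' r' eR' eE'
    rw [htrans, hexp, mul_pow, hcorner, one_mul, hminor]
    exact hih



end PTDFAux

namespace PTDFAux2

open Matrix Finset PTDFAux

variable {n m : ℕ}

/-- The reduced incidence matrix. -/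
def Cbar (src tgt : Fin m → Fin (n + 1)) : Matrix (Fin n) (Fin m) ℝ :=
  (incMat src tgt).submatrix Fin.castSucc id

lemma incMat_eq {src tgt : Fin m → Fin (n + 1)} (hsimple : ∀ e, src e ≠ tgt e)
    (a : Fin (n + 1)) (e : Fin m) :
    incMat src tgt a e = (if src e = a then 1 else 0) - (if tgt e = a then 1 else 0) := by
  by_cases h1 : src e = a
  · by_cases h2 : tgt e = a
    · exact absurd (h1.trans h2.symm) (hsimple e)
    · simp [incMat, h1, h2]
  · by_cases h2 : tgt e = a <;> simp [incMat, h1, h2]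

lemma sum_inc {src tgt : Fin m → Fin (n + 1)} (hsimple : ∀ e, src e ≠ tgt e)
    (e : Fin m) (y : Fin (n + 1) → ℝ) :
    ∑ a : Fin (n + 1), y a * incMat src tgt a e = y (src e) - y (tgt e) := by
  have h1 : ∀ a, y a * incMat src tgt a e
      = (if src e = a then y a else 0) - (if tgt e = a then y a else 0) := by
    intro a
    simp only [incMat_eq hsimple, mul_sub, mul_ite, mul_one, mul_zero]
  rw [Finset.sum_congr rfl (fun a _ => h1 a), Finset.sum_sub_distrib,
    Finset.sum_ite_eq, Finset.sum_ite_eq]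
  simp

lemma rlap_apply (src tgt : Fin m → Fin (n + 1)) (B : Fin m → ℝ) (i j : Fin n) :
    rlap src tgt B i j = ∑ e : Fin m,
      B e * (incMat src tgt i.castSucc e * incMat src tgt j.castSucc e) := by
  simp only [rlap, lap, Matrix.submatrix_apply, Matrix.mul_apply, Matrix.transpose_apply,
    Matrix.diagonal_apply, mul_ite, mul_zero, Finset.sum_ite_eq', Finset.mem_univ, if_true]
  refine Finset.sum_congr rfl fun e _ => ?_
  ring

lemma rlap_eq (src tgt : Fin m → Fin (n + 1)) (B : Fin m → ℝ) :
    rlap src tgt B = Cbar src tgt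
      * Matrix.of (fun (e : Fin m) (j : Fin n) => B e * incMat src tgt j.castSucc e) := by
  ext i j
  rw [rlap_apply, Matrix.mul_apply]
  refine Finset.sum_congr rfl fun e _ => ?_
  simp only [Cbar, Matrix.submatrix_apply, Matrix.of_apply, id_eq]
  ring

lemma det_zero_of_not_conn {src tgt : Fin m → Fin (n + 1)} (hsimple : ∀ e, src e ≠ tgt e)
    (F : Finset (Fin m)) (h : F.card = n) (hnc : ¬ ConnectedOn src tgt F) :
    ((Cbar src tgt).submatrix id (F.orderEmbOfFin h)).det = 0 := by
  classical
  rw [ConnectedOn] at hnc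
  push_neg at hnc
  obtain ⟨a, b, hab⟩ := hnc
  set reach : Fin (n + 1) → Prop := fun x => Relation.ReflTransGen (edgeAdj src tgt F) a x
    with hreach
  set u : Fin (n + 1) → ℝ :=
    fun x => (if reach x then 1 else 0) - (if reach (Fin.last n) then 1 else 0) with hu
  have hulast : u (Fin.last n) = 0 := by simp [hu]
  have hua_ub : u a - u b = 1 := by
    have h1 : reach a := Relation.ReflTransGen.refl
    have h2 : ¬ reach b := hab
    simp [hu, h1, h2]
  have hedge : ∀ e ∈ F, u (src e) = u (tgt e) := by
    intro e he
    have hiff : reach (src e) ↔ reach (tgt e) := by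
      constructor
      · intro hx; exact hx.tail ⟨e, he, Or.inl ⟨rfl, rfl⟩⟩
      · intro hx; exact hx.tail ⟨e, he, Or.inr ⟨rfl, rfl⟩⟩
    simp only [hu]
    by_cases hr : reach (src e)
    · rw [if_pos hr, if_pos (hiff.mp hr)]
    · rw [if_neg hr, if_neg (fun hh => hr (hiff.mpr hh))]
  obtain ⟨x0, hx0last, hx0ne⟩ : ∃ x0 : Fin (n + 1), x0 ≠ Fin.last n ∧ u x0 ≠ 0 := by
    by_cases ha : a = Fin.last n
    · refine ⟨b, ?_, ?_⟩
      · intro hb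
        rw [ha, hb, hulast] at hua_ub
        norm_num at hua_ub
      · intro hb
        rw [hb, ha, hulast] at hua_ub
        norm_num at hua_ub
    · by_cases hua : u a = 0
      · refine ⟨b, ?_, ?_⟩
        · intro hb
          rw [hua, hb, hulast] at hua_ub
          norm_num at hua_ub
        · intro hub
          rw [hua, hub] at hua_ub
          norm_num at hua_ub
      · exact ⟨a, ha, hua⟩
  have key : ∀ e ∈ F, ∑ i : Fin n, u (Fin.castSucc i) * incMat src tgt (Fin.castSucc i) e = 0 := by
    intro e he
    have h1 := sum_inc hsimple e u
    rw [Fin.sum_univ_castSucc, hulast, zero_mul, add_zero] at h1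
    rw [h1, hedge e he, sub_self]
  apply Matrix.exists_vecMul_eq_zero_iff.mp
  refine ⟨fun i => u (Fin.castSucc i), ?_, ?_⟩
  · intro hz
    apply hx0ne
    have h2 := congrFun hz (x0.castPred hx0last)
    rwa [Fin.castSucc_castPred] at h2
  · funext j
    show ∑ i, u (Fin.castSucc i) * ((Cbar src tgt).submatrix id (F.orderEmbOfFin h)) i j = 0
    exact key (F.orderEmbOfFin h j) (F.orderEmbOfFin_mem h j)

open Classical in
lemma detSq {src tgt : Fin m → Fin (n + 1)} (hsimple : ∀ e, src e ≠ tgt e)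
    (F : Finset (Fin m)) (h : F.card = n) :
    ((Cbar src tgt).submatrix id (F.orderEmbOfFin h)).det ^ 2
      = if ConnectedOn src tgt F then 1 else 0 := by
  by_cases hc : ConnectedOn src tgt F
  · rw [if_pos hc]
    have hcast : ∀ i : Fin n, Fin.castSucc i ≠ Fin.last n := fun i => (Fin.castSucc_lt_last i).ne
    let eR : {v : Fin (n + 1) // v ≠ Fin.last n} ≃ Fin n :=
      { toFun := fun v => v.1.castPred v.2
        invFun := fun i => ⟨i.castSucc, hcast i⟩
        left_inv := fun v => Subtype.ext (Fin.castSucc_castPred v.1 v.2)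
        right_inv := fun i => Fin.castPred_castSucc _ }
    let eE : {e : Fin m // e ∈ F} ≃ Fin n := (F.orderIsoOfFin h).toEquiv.symm
    have hs' : ∀ e : {e : Fin m // e ∈ F}, src e.1 ≠ tgt e.1 := fun e => hsimple e.1
    have hcadj : ∀ a b : Fin (n + 1), Relation.ReflTransGen
        (adjOf (fun e : {e : Fin m // e ∈ F} => src e.1) (fun e => tgt e.1)) a b := by
      intro a b
      refine Relation.ReflTransGen.mono ?_ a b (hc a b)
      rintro x y ⟨e, he, hor⟩
      exact ⟨⟨e, he⟩, hor⟩
    have hdet := treeDetAux n (Fin (n + 1)) {e : Fin m // e ∈ F}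
      (fun e => src e.1) (fun e => tgt e.1) hs' hcadj (Fin.last n) eR eE
    have hmat : (Cbar src tgt).submatrix id (F.orderEmbOfFin h)
        = Matrix.of fun i j : Fin n =>
          incVal (fun e : {e : Fin m // e ∈ F} => src e.1) (fun e => tgt e.1)
            (eE.symm j) (eR.symm i).val := by
      ext i j
      show incMat src tgt (Fin.castSucc i) (F.orderEmbOfFin h j)
        = incVal (fun e : {e : Fin m // e ∈ F} => src e.1) (fun e => tgt e.1)
            (eE.symm j) (eR.symm i).val
      have h2 : ((eE.symm j : {e : Fin m // e ∈ F}) : Fin m) = F.orderEmbOfFin h j := by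
        show ((F.orderIsoOfFin h j : {e : Fin m // e ∈ F}) : Fin m) = F.orderEmbOfFin h j
        exact Finset.coe_orderIsoOfFin_apply F h j
      show (if src (F.orderEmbOfFin h j) = Fin.castSucc i then (1:ℝ)
          else if tgt (F.orderEmbOfFin h j) = Fin.castSucc i then -1 else 0)
        = if src (eE.symm j).1 = Fin.castSucc i then (1:ℝ)
          else if tgt (eE.symm j).1 = Fin.castSucc i then -1 else 0
      rw [h2]
    rw [hmat]
    exact hdet
  · rw [if_neg hc, det_zero_of_not_conn hsimple F h hc]
    norm_num

lemma det_rlap_eq_treeSum {src tgt : Fin m → Fin (n + 1)} (hsimple : ∀ e, src e ≠ tgt e)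
    (B : Fin m → ℝ) :
    (rlap src tgt B).det = treeSum src tgt B := by
  classical
  rw [rlap_eq, cauchy_binet]
  unfold treeSum
  rw [Finset.sum_filter]
  refine Finset.sum_congr rfl fun F _ => ?_
  by_cases h : F.card = n
  · rw [dif_pos h]
    have hN : (Matrix.of (fun (e : Fin m) (j : Fin n) =>
          B e * incMat src tgt j.castSucc e)).submatrix (F.orderEmbOfFin h) id
        = Matrix.of fun i j => B (F.orderEmbOfFin h i)
            * ((Cbar src tgt).submatrix id (F.orderEmbOfFin h))ᵀ i j := by
      ext i j
      simp [Cbar]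
    rw [hN, Matrix.det_mul_column, Matrix.det_transpose]
    have hprod : (∏ i : Fin n, B (F.orderEmbOfFin h i)) = ∏ e ∈ F, B e := by
      rw [← Finset.prod_coe_sort F B]
      exact Fintype.prod_equiv (F.orderIsoOfFin h).toEquiv _ _
        (fun i => congrArg B (Finset.coe_orderIsoOfFin_apply F h i).symm)
    have hsq := detSq hsimple F h
    by_cases hcn : ConnectedOn src tgt F
    · rw [if_pos hcn] at hsq
      rw [if_pos ⟨h, hcn⟩, hprod]
      calc ((Cbar src tgt).submatrix id (F.orderEmbOfFin h)).det
            * ((∏ e ∈ F, B e) * ((Cbar src tgt).submatrix id (F.orderEmbOfFin h)).det)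
          = (∏ e ∈ F, B e)
            * ((Cbar src tgt).submatrix id (F.orderEmbOfFin h)).det ^ 2 := by ring
        _ = ∏ e ∈ F, B e := by rw [hsq, mul_one]
    · rw [if_neg hcn] at hsq
      have hdz : ((Cbar src tgt).submatrix id (F.orderEmbOfFin h)).det = 0 :=
        (pow_eq_zero_iff two_ne_zero).mp hsq
      rw [if_neg (fun hist : IsSpanningTree src tgt F => hcn hist.2), hdz]
      ring
  · rw [dif_neg h, if_neg (fun hist : IsSpanningTree src tgt F => h hist.1)]

lemma rlap_posdef {src tgt : Fin m → Fin (n + 1)} (hsimple : ∀ e, src e ≠ tgt e)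
    (B0 : Fin m → ℝ) (hnn : ∀ e, 0 ≤ B0 e) (S : Finset (Fin m))
    (hSpos : ∀ e ∈ S, 0 < B0 e) (hconnS : ConnectedOn src tgt S) :
    (rlap src tgt B0).PosDef := by
  classical
  set xbarf : (Fin n → ℝ) → Fin (n + 1) → ℝ :=
    fun x a => if hha : a = Fin.last n then 0 else x (a.castPred hha) with hxbarf
  have hxbarcs : ∀ (x : Fin n → ℝ) (i : Fin n), xbarf x (Fin.castSucc i) = x i := by
    intro x i
    rw [hxbarf]
    simp only
    rw [dif_neg (Fin.castSucc_lt_last i).ne, Fin.castPred_castSucc]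
  have hxbarlast : ∀ x : Fin n → ℝ, xbarf x (Fin.last n) = 0 := by
    intro x; rw [hxbarf]; simp
  have hw : ∀ (x : Fin n → ℝ) (e : Fin m),
      (∑ i : Fin n, x i * incMat src tgt (Fin.castSucc i) e)
        = xbarf x (src e) - xbarf x (tgt e) := by
    intro x e
    have h1 := sum_inc hsimple e (xbarf x)
    rw [Fin.sum_univ_castSucc, hxbarlast, zero_mul, add_zero] at h1
    rw [← h1]
    exact Finset.sum_congr rfl fun i _ => by rw [hxbarcs]
  have hquad : ∀ x : Fin n → ℝ, x ⬝ᵥ (rlap src tgt B0 *ᵥ x)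
      = ∑ e : Fin m, B0 e * (xbarf x (src e) - xbarf x (tgt e)) ^ 2 := by
    intro x
    have h2 : ∀ e : Fin m, (∑ i : Fin n, ∑ j : Fin n, x i
        * ((B0 e * (incMat src tgt i.castSucc e * incMat src tgt j.castSucc e)) * x j))
        = B0 e * (xbarf x (src e) - xbarf x (tgt e)) ^ 2 := by
      intro e
      rw [← hw x e, sq, Finset.sum_mul_sum, Finset.mul_sum]
      refine Finset.sum_congr rfl fun i _ => ?_
      rw [Finset.mul_sum]
      refine Finset.sum_congr rfl fun j _ => ?_
      ring
    calc x ⬝ᵥ (rlap src tgt B0 *ᵥ x)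
        = ∑ i : Fin n, x i * ∑ j : Fin n, rlap src tgt B0 i j * x j := by
          simp [dotProduct, Matrix.mulVec]
      _ = ∑ i : Fin n, ∑ j : Fin n, x i * ((∑ e : Fin m, B0 e
            * (incMat src tgt i.castSucc e * incMat src tgt j.castSucc e)) * x j) := by
          refine Finset.sum_congr rfl fun i _ => ?_
          rw [Finset.mul_sum]
          refine Finset.sum_congr rfl fun j _ => ?_
          rw [rlap_apply]
      _ = ∑ i : Fin n, ∑ j : Fin n, ∑ e : Fin m, x i * ((B0 e
            * (incMat src tgt i.castSucc e * incMat src tgt j.castSucc e)) * x j) := by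
          refine Finset.sum_congr rfl fun i _ => Finset.sum_congr rfl fun j _ => ?_
          rw [Finset.sum_mul, Finset.mul_sum]
      _ = ∑ i : Fin n, ∑ e : Fin m, ∑ j : Fin n, x i * ((B0 e
            * (incMat src tgt i.castSucc e * incMat src tgt j.castSucc e)) * x j) := by
          exact Finset.sum_congr rfl fun i _ => Finset.sum_comm
      _ = ∑ e : Fin m, ∑ i : Fin n, ∑ j : Fin n, x i * ((B0 e
            * (incMat src tgt i.castSucc e * incMat src tgt j.castSucc e)) * x j) :=
          Finset.sum_comm
      _ = ∑ e : Fin m, B0 e * (xbarf x (src e) - xbarf x (tgt e)) ^ 2 :=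
          Finset.sum_congr rfl fun e _ => h2 e
  rw [Matrix.posDef_iff_dotProduct_mulVec]
  constructor
  · show (rlap src tgt B0)ᴴ = rlap src tgt B0
    ext i j
    show star (rlap src tgt B0 j i) = rlap src tgt B0 i j
    rw [star_trivial, rlap_apply, rlap_apply]
    exact Finset.sum_congr rfl fun e _ => by ring
  · intro x hx
    have hstar : star x = x := funext fun i => star_trivial _
    rw [hstar, hquad]
    have hterm : ∀ e, 0 ≤ B0 e * (xbarf x (src e) - xbarf x (tgt e)) ^ 2 :=
      fun e => mul_nonneg (hnn e) (sq_nonneg _)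
    rcases (Finset.sum_nonneg (fun e _ => hterm e)).lt_or_eq with hlt | heq
    · exact hlt
    · exfalso
      apply hx
      have hzero := (Finset.sum_eq_zero_iff_of_nonneg (fun e _ => hterm e)).mp heq.symm
      have hstepS : ∀ e ∈ S, xbarf x (src e) = xbarf x (tgt e) := by
        intro e he
        have h3 := hzero e (Finset.mem_univ e)
        have h4 : (xbarf x (src e) - xbarf x (tgt e)) ^ 2 = 0 := by
          rcases mul_eq_zero.mp h3 with h5 | h5
          · exact absurd h5 (hSpos e he).ne'
          · exact h5
        have h6 := pow_eq_zero_iff (two_ne_zero) |>.mp h4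
        exact sub_eq_zero.mp h6
      have hconst : ∀ a b : Fin (n + 1), Relation.ReflTransGen (edgeAdj src tgt S) a b →
          xbarf x a = xbarf x b := by
        intro a b hab
        induction hab with
        | refl => rfl
        | tail _ hstep ih =>
          rw [ih]
          obtain ⟨e, he, hor⟩ := hstep
          rcases hor with ⟨h5, h6⟩ | ⟨h5, h6⟩
          · rw [← h5, ← h6]
            exact hstepS e he
          · rw [← h5, ← h6]
            exact (hstepS e he).symm
      funext i
      show x i = 0
      rw [← hxbarcs x i, hconst (Fin.castSucc i) (Fin.last n) (hconnS _ _), hxbarlast]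

end PTDFAux2


/-- **Diagonal PTDF entries, Corollary 1 part 2.**
For a connected graph and each edge `l`, the diagonal PTDF entry `D_{ll}` equals
`1 − (Σ_{F ∈ T_{−l}} β(F)) / (Σ_{F ∈ T_E} β(F))`; consequently `D_{ll} = 1` if `l` is a
bridge, and `0 < D_{ll} < 1` otherwise. -/
theorem diagonal_ptdf_entries
    (src tgt : Fin m → Fin (n + 1)) (B : Fin m → ℝ)
    (hB : ∀ e, 0 < B e)
    (hsimple : ∀ e, src e ≠ tgt e)
    (hconn : ConnectedOn src tgt Finset.univ)
    (l : Fin m) :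
    ptdf src tgt B l (src l) (tgt l)
        = 1 - treeSumAvoiding src tgt B l / treeSum src tgt B
      ∧ (IsBridge src tgt l → ptdf src tgt B l (src l) (tgt l) = 1)
      ∧ (¬ IsBridge src tgt l →
          0 < ptdf src tgt B l (src l) (tgt l)
            ∧ ptdf src tgt B l (src l) (tgt l) < 1) := by
  classical
  have hPD : (rlap src tgt B).PosDef :=
    PTDFAux2.rlap_posdef hsimple B (fun e => (hB e).le) Finset.univ (fun e _ => hB e) hconn
  have hdetA : (rlap src tgt B).det = treeSum src tgt B :=
    PTDFAux2.det_rlap_eq_treeSum hsimple B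
  have hTpos : 0 < treeSum src tgt B := hdetA ▸ hPD.det_pos
  set B' : Fin m → ℝ := Function.update B l 0 with hB'def
  have hB'nn : ∀ e, 0 ≤ B' e := by
    intro e
    by_cases he : e = l
    · subst he; rw [hB'def, Function.update_self]
    · rw [hB'def, Function.update_of_ne he]; exact (hB e).le
  have hB'e : ∀ e, e ≠ l → B' e = B e := fun e he => by
    rw [hB'def, Function.update_of_ne he]
  have hdetA' : (rlap src tgt B').det = treeSum src tgt B' :=
    PTDFAux2.det_rlap_eq_treeSum hsimple B'
  have hTS' : treeSum src tgt B' = treeSumAvoiding src tgt B l := by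
    unfold treeSum treeSumAvoiding
    rw [Finset.sum_filter, Finset.sum_filter]
    refine Finset.sum_congr rfl fun F _ => ?_
    by_cases hP : IsSpanningTree src tgt F
    · by_cases hl : l ∈ F
      · rw [if_pos hP, if_neg (fun hand => hand.2 hl)]
        exact Finset.prod_eq_zero hl (by rw [hB'def, Function.update_self])
      · rw [if_pos hP, if_pos ⟨hP, hl⟩]
        exact Finset.prod_congr rfl fun e he => hB'e e (fun hh => hl (hh ▸ he))
    · rw [if_neg hP, if_neg (fun hand => hP hand.1)]
  set c : Fin n → ℝ := fun i => incMat src tgt (Fin.castSucc i) l with hcdef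
  have hrank : rlap src tgt B' = rlap src tgt B - B l • Matrix.vecMulVec c c := by
    ext i j
    rw [Matrix.sub_apply, Matrix.smul_apply, Matrix.vecMulVec_apply, smul_eq_mul,
      PTDFAux2.rlap_apply, PTDFAux2.rlap_apply]
    have hsplit : ∀ Bx : Fin m → ℝ, (∑ e : Fin m, Bx e
        * (incMat src tgt i.castSucc e * incMat src tgt j.castSucc e))
        = Bx l * (incMat src tgt i.castSucc l * incMat src tgt j.castSucc l)
          + ∑ e ∈ Finset.univ.erase l, Bx e
            * (incMat src tgt i.castSucc e * incMat src tgt j.castSucc e) :=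
      fun Bx => (Finset.add_sum_erase _ _ (Finset.mem_univ l)).symm
    rw [hsplit B', hsplit B]
    have h1 : B' l = 0 := by rw [hB'def, Function.update_self]
    have h2 : (∑ e ∈ Finset.univ.erase l, B' e
          * (incMat src tgt i.castSucc e * incMat src tgt j.castSucc e))
        = ∑ e ∈ Finset.univ.erase l, B e
          * (incMat src tgt i.castSucc e * incMat src tgt j.castSucc e) :=
      Finset.sum_congr rfl fun e he => by rw [hB'e e (Finset.mem_erase.mp he).1]
    rw [h1, h2]
    simp only [hcdef]
    ring
  set chi : Fin (n + 1) → Fin n → ℝ := fun a i => if a = Fin.castSucc i then 1 else 0 with hchi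
  have hchim : ∀ (a : Fin (n + 1)) (ha : a ≠ Fin.last n) (y : Fin n → ℝ),
      chi a ⬝ᵥ y = y (a.castPred ha) := by
    intro a ha y
    have h0 : chi a ⬝ᵥ y = ∑ i, chi a i * y i := rfl
    rw [h0, Finset.sum_eq_single (a.castPred ha)]
    · simp only [hchi]
      rw [if_pos (Fin.castSucc_castPred a ha).symm, one_mul]
    · intro i _ hne
      simp only [hchi]
      rw [if_neg, zero_mul]
      intro hcond
      subst hcond
      exact hne (Fin.castPred_castSucc _).symm
    · intro habs; exact absurd (Finset.mem_univ _) habs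
  have hchi0 : chi (Fin.last n) = 0 := by
    funext i
    simp only [hchi]
    rw [if_neg (Fin.castSucc_lt_last i).ne']
    rfl
  have hAmat : ∀ a b : Fin (n + 1), Amat src tgt B a b
      = chi a ⬝ᵥ ((rlap src tgt B)⁻¹ *ᵥ chi b) := by
    intro a b
    by_cases ha : a = Fin.last n
    · subst ha
      rw [hchi0, zero_dotProduct]
      simp [Amat]
    · by_cases hb : b = Fin.last n
      · subst hb
        rw [hchi0, Matrix.mulVec_zero, dotProduct_zero]
        simp [Amat, ha]
      · rw [hchim a ha]
        have hmv : ((rlap src tgt B)⁻¹ *ᵥ chi b) (a.castPred ha)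
            = chi b ⬝ᵥ (fun j => (rlap src tgt B)⁻¹ (a.castPred ha) j) :=
          dotProduct_comm _ _
        rw [hmv, hchim b hb]
        simp [Amat, ha, hb]
  have hcdecomp : c = chi (src l) - chi (tgt l) := by
    funext i
    simp only [hcdef]
    rw [PTDFAux2.incMat_eq hsimple]
    rfl
  set q : ℝ := c ⬝ᵥ ((rlap src tgt B)⁻¹ *ᵥ c) with hqdef
  have hptdf : ptdf src tgt B l (src l) (tgt l) = B l * q := by
    rw [hqdef, hcdecomp]
    unfold ptdf
    rw [hAmat, hAmat, hAmat, hAmat]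
    rw [Matrix.mulVec_sub, dotProduct_sub, sub_dotProduct,
      sub_dotProduct]
    ring
  have hdetAunit : IsUnit (rlap src tgt B).det := isUnit_iff_ne_zero.mpr hPD.det_pos.ne'
  have hdetfact : (rlap src tgt B').det = (rlap src tgt B).det * (1 - B l * q) := by
    have hfac : rlap src tgt B' = rlap src tgt B
        * (1 - B l • ((rlap src tgt B)⁻¹ * Matrix.vecMulVec c c)) := by
      rw [Matrix.mul_sub, Matrix.mul_one, Matrix.mul_smul,
        Matrix.mul_nonsing_inv_cancel_left _ _ hdetAunit]
      exact hrank
    have hvmv : (rlap src tgt B)⁻¹ * Matrix.vecMulVec c c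
        = Matrix.vecMulVec ((rlap src tgt B)⁻¹ *ᵥ c) c := by
      ext i j
      rw [Matrix.mul_apply, Matrix.vecMulVec_apply]
      have h0 : ((rlap src tgt B)⁻¹ *ᵥ c) i = ∑ k, (rlap src tgt B)⁻¹ i k * c k := rfl
      rw [h0, Finset.sum_mul]
      exact Finset.sum_congr rfl fun k _ => by rw [Matrix.vecMulVec_apply]; ring
    have hsmul : B l • Matrix.vecMulVec ((rlap src tgt B)⁻¹ *ᵥ c) c
        = Matrix.vecMulVec (B l • ((rlap src tgt B)⁻¹ *ᵥ c)) c := by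
      ext i j
      rw [Matrix.smul_apply, Matrix.vecMulVec_apply, Matrix.vecMulVec_apply]
      simp [smul_eq_mul, mul_assoc]
    have hneg : Matrix.vecMulVec (-(B l • ((rlap src tgt B)⁻¹ *ᵥ c))) c
        = -Matrix.vecMulVec (B l • ((rlap src tgt B)⁻¹ *ᵥ c)) c := by
      ext i j
      simp [Matrix.vecMulVec_apply, mul_assoc]
    have hone : (1 : Matrix (Fin n) (Fin n) ℝ)
          - Matrix.vecMulVec (B l • ((rlap src tgt B)⁻¹ *ᵥ c)) c
        = 1 + Matrix.replicateCol (Fin 1) (-(B l • ((rlap src tgt B)⁻¹ *ᵥ c)))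
            * Matrix.replicateRow (Fin 1) c := by
      erw [← Matrix.vecMulVec_eq (Fin 1), hneg, ← sub_eq_add_neg]
    rw [hfac, Matrix.det_mul, hvmv, hsmul, hone]
    erw [Matrix.det_one_add_replicateCol_mul_replicateRow]
    rw [dotProduct_neg, dotProduct_smul]
    rw [hqdef, smul_eq_mul]
    ring
  have hmain : ptdf src tgt B l (src l) (tgt l)
      = 1 - treeSumAvoiding src tgt B l / treeSum src tgt B := by
    have h5 : treeSumAvoiding src tgt B l = treeSum src tgt B * (1 - B l * q) := by
      rw [← hTS', ← hdetA', hdetfact, hdetA]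
    rw [hptdf, h5]
    field_simp
    ring
  refine ⟨hmain, ?_, ?_⟩
  · intro hbridge
    have hzero : treeSumAvoiding src tgt B l = 0 := by
      unfold treeSumAvoiding
      apply Finset.sum_eq_zero
      intro F hF
      rw [Finset.mem_filter] at hF
      exfalso
      apply hbridge
      intro a b
      refine Relation.ReflTransGen.mono ?_ a b (hF.2.1.2 a b)
      rintro x y ⟨e, he, hor⟩
      exact ⟨e, Finset.mem_erase.mpr ⟨fun hh => hF.2.2 (hh ▸ he), Finset.mem_univ e⟩, hor⟩
    rw [hmain, hzero, zero_div, sub_zero]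
  · intro hnb
    have hconn' : ConnectedOn src tgt (Finset.univ.erase l) := not_not.mp hnb
    have hPD' : (rlap src tgt B').PosDef :=
      PTDFAux2.rlap_posdef hsimple B' hB'nn (Finset.univ.erase l)
        (fun e he => by rw [hB'e e (Finset.mem_erase.mp he).1]; exact hB e) hconn'
    have hApos : 0 < treeSumAvoiding src tgt B l := by
      rw [← hTS', ← hdetA']
      exact hPD'.det_pos
    have hcne : c ≠ 0 := by
      intro h0
      by_cases hsl : src l = Fin.last n
      · have htl : tgt l ≠ Fin.last n := fun hh => hsimple l (hsl.trans hh.symm)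
        have h2 := congrFun h0 ((tgt l).castPred htl)
        simp only [hcdef, Pi.zero_apply] at h2
        rw [PTDFAux2.incMat_eq hsimple, Fin.castSucc_castPred,
          if_neg (fun hh : src l = tgt l => hsimple l hh), if_pos rfl] at h2
        norm_num at h2
      · have h2 := congrFun h0 ((src l).castPred hsl)
        simp only [hcdef, Pi.zero_apply] at h2
        rw [PTDFAux2.incMat_eq hsimple, Fin.castSucc_castPred, if_pos rfl,
          if_neg (fun hh : tgt l = src l => hsimple l hh.symm)] at h2
        norm_num at h2
    have hqpos : 0 < q := by
      have h3 := hPD.inv.dotProduct_mulVec_pos hcne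
      have hstar : star c = c := funext fun i => star_trivial _
      rw [hstar] at h3
      rw [hqdef]
      exact h3
    constructor
    · rw [hptdf]
      exact mul_pos (hB l) hqpos
    · rw [hmain]
      have h4 : 0 < treeSumAvoiding src tgt B l / treeSum src tgt B := div_pos hApos hTpos
      linarith
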